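/- With the hypotheses of the rootcheck-order bound (no infinite-order edges of color φ(e)), letting η_min(φ) be the minimum over colors i of the number of edges of color i with rootcheck order 1, every edge e satisfies 2ρ(e) + η_min(φ) − 3 ≤ ⌈N^c/M⌉. -/

import Mathlib

attribute [local instance] Classical.propDecidable

/-- `Solved φ t e` means that, when all edges of color `φ e` are erased in the
complete bipartite (compact) graph with left vertices `Fin a`, right vertices
`Fin b` and edge coloring `φ`, the edge `e` is solved by the iterative
row-column decoder within `t` iterations.  The rootcheck order of `e` is
`ρ(e) = sInf {t | Solved φ t e}` (with `ρ(e) = ∞`, i.e. the infimum of an empty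
set, when `e` is never solved); `Solved φ 1 e` holds iff `e` is a root
(super)symbol, i.e. has a neighboring vertex at which no other incident edge
carries the color `φ e`. -/
def Solved {a b M : ℕ} (φ : Fin a × Fin b → Fin M) : ℕ → Fin a × Fin b → Prop
  | 0, _ => False
  | t + 1, e =>
      (∀ f, f.1 = e.1 → f ≠ e → φ f = φ e → Solved φ t f) ∨
      (∀ f, f.2 = e.2 → f ≠ e → φ f = φ e → Solved φ t f)

namespace RC
variable {a b M : ℕ}

lemma solved_mono (φ : Fin a × Fin b → Fin M) :
    ∀ t f, Solved φ t f → Solved φ (t + 1) f := by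
  intro t
  induction t with
  | zero => intro f h; exact h.elim
  | succ t ih =>
    intro f h
    rcases h with h | h
    · exact Or.inl fun g h1 h2 h3 => ih g (h g h1 h2 h3)
    · exact Or.inr fun g h1 h2 h3 => ih g (h g h1 h2 h3)

lemma solved_le (φ : Fin a × Fin b → Fin M) {t t' : ℕ} (h : t ≤ t') {f} :
    Solved φ t f → Solved φ t' f := by
  induction t' with
  | zero => intro hs; exact (Nat.le_zero.mp h) ▸ hs
  | succ t' ih =>
    intro hs
    rcases Nat.lt_or_ge t (t'+1) with hlt | hge
    · exact solved_mono φ t' f (ih (by omega) hs)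
    · have : t = t' + 1 := by omega
      subst this; exact hs

lemma not_solved_succ {φ : Fin a × Fin b → Fin M} {t : ℕ} {h : Fin a × Fin b}
    (hn : ¬ Solved φ (t + 1) h) :
    (∃ f, f.1 = h.1 ∧ f ≠ h ∧ φ f = φ h ∧ ¬ Solved φ t f) ∧
    (∃ f, f.2 = h.2 ∧ f ≠ h ∧ φ f = φ h ∧ ¬ Solved φ t f) := by
  have hn' : ¬ ((∀ f, f.1 = h.1 → f ≠ h → φ f = φ h → Solved φ t f) ∨
      (∀ f, f.2 = h.2 → f ≠ h → φ f = φ h → Solved φ t f)) := hn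
  rw [not_or] at hn'
  obtain ⟨h1, h2⟩ := hn'
  push_neg at h1 h2
  exact ⟨h1, h2⟩

lemma stopping (φ : Fin a × Fin b → Fin M) (c : Fin M) (S : Finset (Fin a × Fin b))
    (hc : ∀ h ∈ S, φ h = c)
    (hcov : ∀ h ∈ S, (∃ f ∈ S, f ≠ h ∧ f.1 = h.1) ∧ (∃ f ∈ S, f ≠ h ∧ f.2 = h.2)) :
    ∀ t, ∀ h ∈ S, ¬ Solved φ t h := by
  intro t
  induction t with
  | zero => intro h _ hs; exact hs.elim
  | succ t ih =>
    intro h hS hs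
    rcases hs with hs | hs
    · obtain ⟨f, hfS, hne, hf1⟩ := (hcov h hS).1
      exact ih f hfS (hs f hf1 hne (by rw [hc f hfS, hc h hS]))
    · obtain ⟨f, hfS, hne, hf2⟩ := (hcov h hS).2
      exact ih f hfS (hs f hf2 hne (by rw [hc f hfS, hc h hS]))

noncomputable def pick (φ : Fin a × Fin b → Fin M) (c : Fin M) (s : ℕ) (sd : Bool)
    (h : Fin a × Fin b) : Fin a × Fin b :=
  if hx : ∃ f, f ≠ h ∧ (if sd then f.2 = h.2 else f.1 = h.1) ∧ φ f = c ∧ ¬ Solved φ s f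
  then hx.choose else h

noncomputable def chain (φ : Fin a × Fin b → Fin M) (c : Fin M) (t : ℕ) (sd : ℕ → Bool)
    (start : Fin a × Fin b) : ℕ → Fin a × Fin b
  | 0 => start
  | j + 1 => pick φ c (t - 1 - j) (sd j) (chain φ c t sd start j)

lemma chain_spec (φ : Fin a × Fin b → Fin M) (c : Fin M) (t : ℕ) (sd : ℕ → Bool)
    (start : Fin a × Fin b) (hc : φ start = c) (hns : ¬ Solved φ t start) :
    ∀ j, j ≤ t - 1 →
      (φ (chain φ c t sd start j) = c ∧ ¬ Solved φ (t - j) (chain φ c t sd start j)) ∧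
      (∀ i, j = i + 1 →
        chain φ c t sd start j ≠ chain φ c t sd start i ∧
        (sd i = true → (chain φ c t sd start j).2 = (chain φ c t sd start i).2) ∧
        (sd i = false → (chain φ c t sd start j).1 = (chain φ c t sd start i).1)) := by
  intro j
  induction j with
  | zero =>
    intro _
    refine ⟨⟨hc, ?_⟩, fun i hi => by omega⟩
    simpa [chain] using hns
  | succ j ih =>
    intro hj
    have hj' : j ≤ t - 1 := by omega
    obtain ⟨⟨ihc, ihns⟩, _⟩ := ih hj'
    have ht : t - j = (t - 1 - j) + 1 := by omega
    rw [ht] at ihns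
    have hw := not_solved_succ ihns
    set h := chain φ c t sd start j with hh
    have hx : ∃ f, f ≠ h ∧ (if sd j then f.2 = h.2 else f.1 = h.1) ∧ φ f = c
        ∧ ¬ Solved φ (t - 1 - j) f := by
      cases hsd : sd j
      · obtain ⟨f, hf1, hfne, hfc, hfns⟩ := hw.1
        exact ⟨f, hfne, by simp [hf1], by rw [hfc, ihc], hfns⟩
      · obtain ⟨f, hf2, hfne, hfc, hfns⟩ := hw.2
        exact ⟨f, hfne, by simp [hf2], by rw [hfc, ihc], hfns⟩
    have hdef : chain φ c t sd start (j+1) = pick φ c (t - 1 - j) (sd j) h := rfl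
    have hpick : chain φ c t sd start (j+1) = hx.choose := by
      rw [hdef, pick, dif_pos hx]
    obtain ⟨cne, ccoord, ccol, cns⟩ := hx.choose_spec
    rw [← hpick] at cne ccoord ccol cns
    refine ⟨⟨ccol, ?_⟩, fun i hi => ?_⟩
    · have : t - (j+1) = t - 1 - j := by omega
      rw [this]; exact cns
    · have : i = j := by omega
      subst this
      refine ⟨cne, ?_, ?_⟩
      · intro hsd; rw [hsd] at ccoord; simpa using ccoord
      · intro hsd; rw [hsd] at ccoord; simpa using ccoord

lemma walk_inj {α β : Type*} (w : ℕ → α × β) (n s : ℕ)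
    (hstep : ∀ k, k < n → w (k+1) ≠ w k ∧
       (Odd (k+s) → (w (k+1)).2 = (w k).2) ∧ (¬ Odd (k+s) → (w (k+1)).1 = (w k).1))
    (hnostop : ∀ S : Finset (α × β), S.Nonempty →
       (∀ h ∈ S, ∃ k, k ≤ n ∧ w k = h) →
       (∀ h ∈ S, (∃ f ∈ S, f ≠ h ∧ f.1 = h.1) ∧ (∃ f ∈ S, f ≠ h ∧ f.2 = h.2)) → False) :
    ∀ p q, p ≤ n → q ≤ n → w p = w q → p = q := by
  classical
  suffices main : ∀ d, 0 < d → ∀ p, p + d ≤ n → w p ≠ w (p + d) by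
    intro p q hp hq hw
    rcases lt_trichotomy p q with h | h | h
    · exfalso
      have h2 := main (q - p) (by omega) p (by omega)
      rw [show p + (q - p) = q by omega] at h2
      exact h2 hw
    · exact h
    · exfalso
      have h2 := main (p - q) (by omega) q (by omega)
      rw [show q + (p - q) = p by omega] at h2
      exact h2 hw.symm
  by_contra hcon
  push_neg at hcon
  obtain ⟨d0, hd0, p0, hp0, hw0⟩ := hcon
  set D : Set ℕ := {d | 0 < d ∧ ∃ p, p + d ≤ n ∧ w p = w (p + d)} with hD
  have hDne : D.Nonempty := ⟨d0, hd0, p0, hp0, hw0⟩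
  obtain ⟨hL0, p, hpn, hwp⟩ : sInf D ∈ D := Nat.sInf_mem hDne
  set L := sInf D with hL
  set q := p + L with hq
  have hmin : ∀ i j, p ≤ i → i < j → j ≤ q - 1 → w i ≠ w j := by
    intro i j hi hij hj hww
    have hmem : (j - i) ∈ D := ⟨by omega, i, by omega, by
      rw [show i + (j - i) = j by omega]; exact hww⟩
    have := Nat.sInf_le hmem
    omega
  have hL1 : L ≠ 1 := by
    intro h
    have := (hstep p (by omega)).1
    rw [show p + 1 = q by omega] at this
    exact this hwp.symm
  have hL2 : 2 ≤ L := by omega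
  have hq1 : (q - 1) + 1 = q := by omega
  have stepNe : ∀ k, k < n → w (k+1) ≠ w k := fun k hk => (hstep k hk).1
  have stepC : ∀ k, k < n → Odd (k+s) → (w (k+1)).2 = (w k).2 :=
    fun k hk => (hstep k hk).2.1
  have stepR : ∀ k, k < n → ¬ Odd (k+s) → (w (k+1)).1 = (w k).1 :=
    fun k hk => (hstep k hk).2.2
  -- shares between w (q-1) and w p (via w q = w p), tagged by parity of q-1+s
  have qshareC : Odd (q-1+s) → (w p).2 = (w (q-1)).2 := by
    intro ho
    have := stepC (q-1) (by omega) ho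
    rw [hq1, ← hwp] at this
    exact this
  have qshareR : ¬ Odd (q-1+s) → (w p).1 = (w (q-1)).1 := by
    intro ho
    have := stepR (q-1) (by omega) ho
    rw [hq1, ← hwp] at this
    exact this
  rcases Nat.even_or_odd L with hLpar | hLpar
  · -- EVEN CASE: stopping set is w '' [p, q-1]
    have hLm : L % 2 = 0 := Nat.even_iff.mp hLpar
    set S : Finset (α × β) := (Finset.Icc p (q-1)).image w with hS
    have hmemS : ∀ k, p ≤ k → k ≤ q - 1 → w k ∈ S := by
      intro k h1 h2; exact Finset.mem_image_of_mem w (Finset.mem_Icc.mpr ⟨h1, h2⟩)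
    apply hnostop S ⟨w p, hmemS p le_rfl (by omega)⟩
    · intro h hh
      obtain ⟨k, hk, rfl⟩ := Finset.mem_image.mp hh
      exact ⟨k, by have := Finset.mem_Icc.mp hk; omega, rfl⟩
    intro h hh
    obtain ⟨k, hk, rfl⟩ := Finset.mem_image.mp hh
    obtain ⟨hk1, hk2⟩ := Finset.mem_Icc.mp hk
    have part1 : ∃ f ∈ S, f ≠ w k ∧
        (Odd (k+s) → f.2 = (w k).2) ∧ (¬ Odd (k+s) → f.1 = (w k).1) := by
      rcases Nat.lt_or_ge k (q-1) with hlt | hge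
      · exact ⟨w (k+1), hmemS _ (by omega) (by omega), stepNe k (by omega),
          stepC k (by omega), stepR k (by omega)⟩
      · have hkq : k = q - 1 := by omega
        subst hkq
        exact ⟨w p, hmemS _ le_rfl (by omega),
          hmin p (q-1) le_rfl (by omega) le_rfl, qshareC, qshareR⟩
    have part2 : ∃ f ∈ S, f ≠ w k ∧
        (Odd (k+s) → f.1 = (w k).1) ∧ (¬ Odd (k+s) → f.2 = (w k).2) := by
      rcases Nat.lt_or_ge p k with hlt | hge
      · refine ⟨w (k-1), hmemS _ (by omega) (by omega), ?_, ?_, ?_⟩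
        · have := stepNe (k-1) (by omega)
          rw [show k - 1 + 1 = k by omega] at this
          exact fun hc => this hc.symm
        · intro ho
          have hne : ¬ Odd (k-1+s) := by rw [Nat.odd_iff] at ho ⊢; omega
          have := stepR (k-1) (by omega) hne
          rw [show k - 1 + 1 = k by omega] at this
          exact this.symm
        · intro ho
          have hne : Odd (k-1+s) := by rw [Nat.odd_iff] at ho ⊢; omega
          have := stepC (k-1) (by omega) hne
          rw [show k - 1 + 1 = k by omega] at this
          exact this.symm
      · have hkp : k = p := by omega
        subst hkp
        refine ⟨w (q-1), hmemS _ (by omega) le_rfl,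
          fun hc => hmin k (q-1) le_rfl (by omega) le_rfl hc.symm, ?_, ?_⟩
        · intro ho
          have hne : ¬ Odd (q-1+s) := by rw [Nat.odd_iff] at ho ⊢; omega
          exact (qshareR hne).symm
        · intro ho
          have hne : Odd (q-1+s) := by rw [Nat.odd_iff] at ho ⊢; omega
          exact (qshareC hne).symm
    constructor
    · rcases Classical.em (Odd (k+s)) with ho | ho
      · obtain ⟨f, hfS, hfne, hf, _⟩ := part2
        exact ⟨f, hfS, hfne, hf ho⟩
      · obtain ⟨f, hfS, hfne, _, hf⟩ := part1
        exact ⟨f, hfS, hfne, hf ho⟩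
    · rcases Classical.em (Odd (k+s)) with ho | ho
      · obtain ⟨f, hfS, hfne, hf, _⟩ := part1
        exact ⟨f, hfS, hfne, hf ho⟩
      · obtain ⟨f, hfS, hfne, _, hf⟩ := part2
        exact ⟨f, hfS, hfne, hf ho⟩
  · -- ODD CASE: L ≥ 3; stopping set is w '' [p+1, q-1]
    have hLm : L % 2 = 1 := Nat.odd_iff.mp hLpar
    have hL3 : 3 ≤ L := by omega
    -- junction share between w (p+1) and w (q-1), tagged by parity of p+s
    have jshareC : Odd (p+s) → (w (q-1)).2 = (w (p+1)).2 := by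
      intro ho
      have h1 := stepC p (by omega) ho
      have h2 := qshareC (by rw [Nat.odd_iff] at ho ⊢; omega)
      exact (h1.trans h2).symm
    have jshareR : ¬ Odd (p+s) → (w (q-1)).1 = (w (p+1)).1 := by
      intro ho
      have h1 := stepR p (by omega) ho
      have h2 := qshareR (by rw [Nat.odd_iff] at ho ⊢; omega)
      exact (h1.trans h2).symm
    set S : Finset (α × β) := (Finset.Icc (p+1) (q-1)).image w with hS
    have hmemS : ∀ k, p+1 ≤ k → k ≤ q - 1 → w k ∈ S := by
      intro k h1 h2; exact Finset.mem_image_of_mem w (Finset.mem_Icc.mpr ⟨h1, h2⟩)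
    apply hnostop S ⟨w (p+1), hmemS (p+1) le_rfl (by omega)⟩
    · intro h hh
      obtain ⟨k, hk, rfl⟩ := Finset.mem_image.mp hh
      exact ⟨k, by have := Finset.mem_Icc.mp hk; omega, rfl⟩
    intro h hh
    obtain ⟨k, hk, rfl⟩ := Finset.mem_image.mp hh
    obtain ⟨hk1, hk2⟩ := Finset.mem_Icc.mp hk
    have part1 : ∃ f ∈ S, f ≠ w k ∧
        (Odd (k+s) → f.2 = (w k).2) ∧ (¬ Odd (k+s) → f.1 = (w k).1) := by
      rcases Nat.lt_or_ge k (q-1) with hlt | hge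
      · exact ⟨w (k+1), hmemS _ (by omega) (by omega), stepNe k (by omega),
          stepC k (by omega), stepR k (by omega)⟩
      · have hkq : k = q - 1 := by omega
        subst hkq
        refine ⟨w (p+1), hmemS _ le_rfl (by omega),
          hmin (p+1) (q-1) (by omega) (by omega) le_rfl, ?_, ?_⟩
        · intro ho
          exact (jshareC (by rw [Nat.odd_iff] at ho ⊢; omega)).symm
        · intro ho
          exact (jshareR (by rw [Nat.odd_iff] at ho ⊢; omega)).symm
    have part2 : ∃ f ∈ S, f ≠ w k ∧
        (Odd (k+s) → f.1 = (w k).1) ∧ (¬ Odd (k+s) → f.2 = (w k).2) := by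
      rcases Nat.lt_or_ge (p+1) k with hlt | hge
      · refine ⟨w (k-1), hmemS _ (by omega) (by omega), ?_, ?_, ?_⟩
        · have := stepNe (k-1) (by omega)
          rw [show k - 1 + 1 = k by omega] at this
          exact fun hc => this hc.symm
        · intro ho
          have hne : ¬ Odd (k-1+s) := by rw [Nat.odd_iff] at ho ⊢; omega
          have := stepR (k-1) (by omega) hne
          rw [show k - 1 + 1 = k by omega] at this
          exact this.symm
        · intro ho
          have hne : Odd (k-1+s) := by rw [Nat.odd_iff] at ho ⊢; omega
          have := stepC (k-1) (by omega) hne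
          rw [show k - 1 + 1 = k by omega] at this
          exact this.symm
      · have hkp : k = p + 1 := by omega
        subst hkp
        refine ⟨w (q-1), hmemS _ (by omega) le_rfl,
          (hmin (p+1) (q-1) (by omega) (by omega) le_rfl).symm, ?_, ?_⟩
        · intro ho
          exact jshareR (by rw [Nat.odd_iff] at ho ⊢; omega)
        · intro ho
          exact jshareC (by rw [Nat.odd_iff] at ho ⊢; omega)
    constructor
    · rcases Classical.em (Odd (k+s)) with ho | ho
      · obtain ⟨f, hfS, hfne, hf, _⟩ := part2
        exact ⟨f, hfS, hfne, hf ho⟩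
      · obtain ⟨f, hfS, hfne, _, hf⟩ := part1
        exact ⟨f, hfS, hfne, hf ho⟩
    · rcases Classical.em (Odd (k+s)) with ho | ho
      · obtain ⟨f, hfS, hfne, hf, _⟩ := part1
        exact ⟨f, hfS, hfne, hf ho⟩
      · obtain ⟨f, hfS, hfne, _, hf⟩ := part2
        exact ⟨f, hfS, hfne, hf ho⟩

end RC

/-- Theorem 1, inequality (8): with `η_min(φ)` the minimum over
the colors `i` of the number of edges of color `i` with rootcheck order 1, if
no edge of color `φ e` has infinite rootcheck order then
`2·ρ(e) + η_min(φ) − 3 ≤ ⌈N^c/M⌉` (stated additively over ℕ). -/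
theorem rootcheck_order_etamin_inequality
    (a b M : ℕ) (hM : 0 < M) (φ : Fin a × Fin b → Fin M)
    (hbal : ∀ i : Fin M,
      (Finset.univ.filter fun f => φ f = i).card ≤ (a * b + M - 1) / M)
    (e : Fin a × Fin b)
    (hfin : ∀ f, φ f = φ e → ∃ t, Solved φ t f) :
    2 * sInf {t | Solved φ t e} +
      sInf (Set.range fun i : Fin M =>
        (Finset.univ.filter fun f =>
          φ f = i ∧ sInf {t | Solved φ t f} = 1).card)
      ≤ (a * b + M - 1) / M + 3 := by
  classical
  set K := (a * b + M - 1) / M with hK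
  set η := sInf (Set.range fun i : Fin M =>
        (Finset.univ.filter fun f =>
          φ f = i ∧ sInf {t | Solved φ t f} = 1).card) with hη
  set A : Finset (Fin a × Fin b) :=
    Finset.univ.filter (fun f => φ f = φ e ∧ sInf {t | Solved φ t f} = 1) with hA
  have hηA : η ≤ A.card := Nat.sInf_le ⟨φ e, rfl⟩
  set C : Finset (Fin a × Fin b) := Finset.univ.filter (fun f => φ f = φ e) with hC
  have hCK : C.card ≤ K := hbal (φ e)
  have hAC : A ⊆ C := by
    intro x hx
    simp only [hA, hC, Finset.mem_filter] at hx ⊢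
    exact ⟨hx.1, hx.2.1⟩
  set r := sInf {t | Solved φ t e} with hr
  have hre : Solved φ r e := Nat.sInf_mem (hfin e rfl)
  have hr1 : 1 ≤ r := by
    rcases Nat.eq_zero_or_pos r with h0 | h1
    · rw [h0] at hre; exact hre.elim
    · exact h1
  rcases Nat.lt_or_ge r 2 with hr2 | hr2
  · -- r = 1
    have : η ≤ K := le_trans hηA (le_trans (Finset.card_le_card hAC) hCK)
    omega
  -- main case: r ≥ 2
  set t := r - 1 with hT
  have ht1 : 1 ≤ t := by omega
  have hnse : ¬ Solved φ t e := by
    intro hs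
    have hle : r ≤ t := by rw [hr]; exact Nat.sInf_le hs
    omega
  set cC : ℕ → Fin a × Fin b := RC.chain φ (φ e) t (fun j => j % 2 == 0) e with hcC
  set cD : ℕ → Fin a × Fin b := RC.chain φ (φ e) t (fun j => j % 2 == 1) e with hcD
  have specC := RC.chain_spec φ (φ e) t (fun j => j % 2 == 0) e rfl hnse
  have specD := RC.chain_spec φ (φ e) t (fun j => j % 2 == 1) e rfl hnse
  rw [← hcC] at specC
  rw [← hcD] at specD
  set w : ℕ → Fin a × Fin b :=
    fun k => if k < t - 1 then cD (t - 1 - k) else cC (k - (t - 1)) with hw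
  set n := 2 * t - 2 with hn
  have hwD : ∀ k, k ≤ t - 1 → w k = cD (t - 1 - k) := by
    intro k hk
    rcases Nat.lt_or_ge k (t-1) with h | h
    · simp only [hw, if_pos h]
    · have hk' : k = t - 1 := by omega
      subst hk'
      simp only [hw, if_neg (lt_irrefl (t-1)), Nat.sub_self]
      rfl
  have hwC : ∀ k, t - 1 ≤ k → w k = cC (k - (t - 1)) := by
    intro k hk
    simp only [hw, if_neg (by omega : ¬ k < t - 1)]
  -- walk properties: colors and not-solved-1
  have hprop : ∀ k, k ≤ n → φ (w k) = φ e ∧ ¬ Solved φ 1 (w k) := by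
    intro k hk
    rcases Nat.lt_or_ge k (t-1) with h | h
    · rw [hwD k (by omega)]
      obtain ⟨⟨hcol, hns⟩, _⟩ := specD (t - 1 - k) (by omega)
      refine ⟨hcol, fun h1 => hns (RC.solved_le φ (by omega) h1)⟩
    · rw [hwC k h]
      obtain ⟨⟨hcol, hns⟩, _⟩ := specC (k - (t - 1)) (by omega)
      refine ⟨hcol, fun h1 => hns (RC.solved_le φ (by omega) h1)⟩
  -- walk steps
  have hstep : ∀ k, k < n → w (k+1) ≠ w k ∧
      (Odd (k+t) → (w (k+1)).2 = (w k).2) ∧ (¬ Odd (k+t) → (w (k+1)).1 = (w k).1) := by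
    intro k hk
    rcases Nat.lt_or_ge k (t-1) with h | h
    · -- D side: w k = cD (i+1), w (k+1) = cD i with i = t-2-k
      have e1 : w k = cD (t - 1 - k) := hwD k (by omega)
      have e2 : w (k+1) = cD (t - 1 - (k+1)) := hwD (k+1) (by omega)
      have hi : t - 1 - k = (t - 1 - (k+1)) + 1 := by omega
      obtain ⟨_, hstepD⟩ := specD (t - 1 - k) (by omega)
      obtain ⟨hne, hcol, hrow⟩ := hstepD (t - 1 - (k+1)) hi
      rw [← e1, ← e2] at hne hcol hrow
      refine ⟨fun hc => hne hc.symm, ?_, ?_⟩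
      · intro ho
        have : (t - 1 - (k+1)) % 2 = 1 := by rw [Nat.odd_iff] at ho; omega
        exact (hcol (by simp [this])).symm
      · intro ho
        have : (t - 1 - (k+1)) % 2 = 0 := by rw [Nat.odd_iff] at ho; omega
        exact (hrow (by simp [this])).symm
    · -- C side: w k = cC j, w (k+1) = cC (j+1), j = k - (t-1)
      have e1 : w k = cC (k - (t - 1)) := hwC k h
      have e2 : w (k+1) = cC ((k+1) - (t - 1)) := hwC (k+1) (by omega)
      have hi : (k+1) - (t - 1) = (k - (t - 1)) + 1 := by omega
      obtain ⟨_, hstepC⟩ := specC ((k+1) - (t - 1)) (by omega)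
      obtain ⟨hne, hcol, hrow⟩ := hstepC (k - (t - 1)) hi
      rw [← e1, ← e2] at hne hcol hrow
      refine ⟨hne, ?_, ?_⟩
      · intro ho
        have : (k - (t - 1)) % 2 = 0 := by rw [Nat.odd_iff] at ho; omega
        exact hcol (by simp [this])
      · intro ho
        have : (k - (t - 1)) % 2 = 1 := by rw [Nat.odd_iff] at ho; omega
        exact hrow (by simp [this])
  -- no stopping sets
  have hnostop : ∀ S : Finset (Fin a × Fin b), S.Nonempty →
      (∀ h ∈ S, ∃ k, k ≤ n ∧ w k = h) →
      (∀ h ∈ S, (∃ f ∈ S, f ≠ h ∧ f.1 = h.1) ∧ (∃ f ∈ S, f ≠ h ∧ f.2 = h.2)) → False := by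
    intro S hSne hSw hScov
    have hcolS : ∀ h ∈ S, φ h = φ e := by
      intro h hh
      obtain ⟨k, hk, rfl⟩ := hSw h hh
      exact (hprop k hk).1
    obtain ⟨h0, hh0⟩ := hSne
    obtain ⟨t0, ht0⟩ := hfin h0 (hcolS h0 hh0)
    exact RC.stopping φ (φ e) S hcolS hScov t0 h0 hh0 ht0
  have hinj := RC.walk_inj w n t hstep hnostop
  -- counting
  set B : Finset (Fin a × Fin b) := (Finset.range (n+1)).image w with hB
  have hBcard : B.card = n + 1 := by
    rw [hB, Finset.card_image_of_injOn, Finset.card_range]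
    intro x hx y hy hxy
    exact hinj x y (by simpa using Nat.lt_succ_iff.mp (Finset.mem_range.mp hx))
      (by simpa using Nat.lt_succ_iff.mp (Finset.mem_range.mp hy)) hxy
  have hBC : B ⊆ C := by
    intro x hx
    obtain ⟨k, hk, rfl⟩ := Finset.mem_image.mp hx
    simp only [hC, Finset.mem_filter, Finset.mem_univ, true_and]
    exact (hprop k (by have := Finset.mem_range.mp hk; omega)).1
  have hdisj : Disjoint A B := by
    rw [Finset.disjoint_left]
    intro x hxA hxB
    obtain ⟨k, hk, rfl⟩ := Finset.mem_image.mp hxB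
    have hns1 := (hprop k (by have := Finset.mem_range.mp hk; omega)).2
    simp only [hA, Finset.mem_filter] at hxA
    have hmem : Solved φ (sInf {t | Solved φ t (w k)}) (w k) :=
      Nat.sInf_mem (hfin (w k) hxA.2.1)
    rw [hxA.2.2] at hmem
    exact hns1 hmem
  have hunion : A ∪ B ⊆ C := Finset.union_subset hAC hBC
  have hcount : A.card + B.card ≤ C.card := by
    rw [← Finset.card_union_of_disjoint hdisj]
    exact Finset.card_le_card hunion
  have hfinal : η + (n + 1) ≤ K := by
    calc η + (n + 1) ≤ A.card + B.card := by omega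
    _ ≤ C.card := hcount
    _ ≤ K := hCK
  show 2 * r + η ≤ K + 3
  omega
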